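/- For every natural number N there exists δ > 0 such that for all b with 0 < b < δ, the b-orbit h_b has at least N zeros on (0,∞). -/

import Mathlib

open Real Set Filter Topology intervalIntegral MeasureTheory


/-- A global `C²` solution of equation (14), `h'' - coth(x) h' + sin(2h) = 0` on `(0,∞)`. -/
def SolvesEq14 (h : ℝ → ℝ) : Prop :=
  ContDiffOn ℝ 2 h (Set.Ioi 0) ∧
  ∀ x ∈ Set.Ioi (0:ℝ),
    deriv (deriv h) x - (Real.cosh x / Real.sinh x) * deriv h x + Real.sin (2 * h x) = 0

/-- The `b`-orbit: a global solution of equation (14) with `h(x)/x² → b` as `x → 0⁺`. -/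
def IsBOrbit (b : ℝ) (h : ℝ → ℝ) : Prop :=
  SolvesEq14 h ∧ Filter.Tendsto (fun x => h x / x ^ 2) (𝓝[>] (0:ℝ)) (𝓝 b)

set_option maxHeartbeats 1000000

noncomputable section

namespace Lem3


lemma cosh_one_lt : Real.cosh 1 < 1.6 := by
  rw [Real.cosh_eq]
  have h1 : Real.exp 1 < 2.7182818286 := Real.exp_one_lt_d9
  have h2 : (2.7182818283 : ℝ) < Real.exp 1 := Real.exp_one_gt_d9
  have h3 : Real.exp (-1) = 1 / Real.exp 1 := by
    rw [Real.exp_neg]; ring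
  have h4 : Real.exp (-1) < 0.37 := by
    rw [h3]
    rw [div_lt_iff₀ (by positivity)]
    nlinarith
  nlinarith

lemma sinh_one_lt : Real.sinh 1 < 1.2 := by
  rw [Real.sinh_eq]
  have h1 : Real.exp 1 < 2.7182818286 := Real.exp_one_lt_d9
  have h2 : (2.7182818283 : ℝ) < Real.exp 1 := Real.exp_one_gt_d9
  have h4 : (0.3678:ℝ) < Real.exp (-1) := by
    rw [Real.exp_neg]
    rw [lt_inv_comm₀ (by norm_num) (Real.exp_pos 1)]
    nlinarith
  nlinarith

lemma sinh_three_ge : (9:ℝ) ≤ Real.sinh 3 := by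
  rw [Real.sinh_eq]
  have h2 : (2.7182818283 : ℝ) < Real.exp 1 := Real.exp_one_gt_d9
  have h3 : Real.exp 3 = Real.exp 1 * Real.exp 1 * Real.exp 1 := by
    rw [← Real.exp_add, ← Real.exp_add]; norm_num
  have h5 : Real.exp (-3) ≤ 1 := by
    rw [Real.exp_le_one_iff]; norm_num
  nlinarith

lemma cosh_le_two_sinh {t : ℝ} (ht : 1 ≤ t) : Real.cosh t ≤ 2 * Real.sinh t := by
  rw [Real.cosh_eq, Real.sinh_eq]
  have h2 : (2.7182818283 : ℝ) < Real.exp 1 := Real.exp_one_gt_d9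
  have h3 : Real.exp 1 ≤ Real.exp t := Real.exp_le_exp.2 ht
  have h4 : Real.exp (-t) = 1 / Real.exp t := by rw [Real.exp_neg]; ring
  have h5 : (0:ℝ) < Real.exp t := Real.exp_pos _
  rw [h4]
  have h6 : (1 / Real.exp t) * Real.exp t = 1 := by field_simp
  nlinarith [h6, sq_nonneg (Real.exp t)]

lemma cosh_sub_one_ge {t : ℝ} (ht : 0 ≤ t) : t^2/2 ≤ Real.cosh t - 1 := by
  have h1 : Real.cosh t = 2 * Real.sinh (t/2)^2 + 1 := by
    have := Real.cosh_two_mul (t/2)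
    have h2 := Real.cosh_sq (t/2)
    rw [show 2*(t/2) = t by ring] at this
    nlinarith
  have h3 : t/2 ≤ Real.sinh (t/2) := Real.self_le_sinh_iff.2 (by linarith)
  nlinarith

lemma sinh_le_mul_cosh {t : ℝ} (ht : 0 ≤ t) : Real.sinh t ≤ t * Real.cosh t := by
  have hmono : MonotoneOn (fun t => t * Real.cosh t - Real.sinh t) (Ici 0) := by
    apply monotoneOn_of_deriv_nonneg (convex_Ici 0)
    · exact (((continuous_id.mul Real.continuous_cosh).sub Real.continuous_sinh)).continuousOn
    · intro x _
      exact (((differentiable_id.mul Real.differentiable_cosh).sub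
        Real.differentiable_sinh) x).differentiableWithinAt
    · intro x hx
      rw [interior_Ici, mem_Ioi] at hx
      have hd : HasDerivAt (fun t => t * Real.cosh t - Real.sinh t) (x * Real.sinh x) x := by
        have := ((hasDerivAt_id x).mul (Real.hasDerivAt_cosh x)).sub (Real.hasDerivAt_sinh x)
        exact this.congr_deriv (by simp only [one_mul, id_eq]; ring)
        
      rw [hd.deriv]
      exact mul_nonneg hx.le ((Real.sinh_pos_iff.2 hx).le)
  have := hmono (self_mem_Ici) (mem_Ici.2 ht) ht
  simpa using this

lemma sinh_le_linear {t : ℝ} (h0 : 0 ≤ t) (h1 : t ≤ 1) : Real.sinh t ≤ Real.cosh 1 * t := by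
  have := sinh_le_mul_cosh h0
  have hc : Real.cosh t ≤ Real.cosh 1 := by
    rw [Real.cosh_le_cosh]
    rw [abs_of_nonneg h0, abs_one]; exact h1
  nlinarith [Real.cosh_pos (x := t)]


variable {h : ℝ → ℝ}

lemma hd1 (hS : SolvesEq14 h) {x : ℝ} (hx : 0 < x) : HasDerivAt h (deriv h x) x := by
  have hd : DifferentiableOn ℝ h (Ioi 0) := hS.1.differentiableOn (by norm_num)
  exact (hd.differentiableAt (isOpen_Ioi.mem_nhds hx)).hasDerivAt

lemma hcd1 (hS : SolvesEq14 h) : ContDiffOn ℝ 1 (deriv h) (Ioi 0) :=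
  hS.1.deriv_of_isOpen isOpen_Ioi (by norm_num)

lemma hcont (hS : SolvesEq14 h) : ContinuousOn h (Ioi 0) := hS.1.continuousOn

lemma hcont' (hS : SolvesEq14 h) : ContinuousOn (deriv h) (Ioi 0) := (hcd1 hS).continuousOn

lemma hd2 (hS : SolvesEq14 h) {x : ℝ} (hx : 0 < x) :
    HasDerivAt (deriv h) ((Real.cosh x / Real.sinh x) * deriv h x - Real.sin (2 * h x)) x := by
  have hd : DifferentiableOn ℝ (deriv h) (Ioi 0) := (hcd1 hS).differentiableOn (by norm_num)
  have h1 := (hd.differentiableAt (isOpen_Ioi.mem_nhds hx)).hasDerivAt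
  have h2 := hS.2 x hx
  have : deriv (deriv h) x = Real.cosh x / Real.sinh x * deriv h x - Real.sin (2 * h x) := by
    linarith
  rwa [this] at h1

lemma g_hasDeriv (hS : SolvesEq14 h) {x : ℝ} (hx : 0 < x) :
    HasDerivAt (fun y => deriv h y / Real.sinh y) (-(Real.sin (2 * h x) / Real.sinh x)) x := by
  have hs : Real.sinh x ≠ 0 := (Real.sinh_pos_iff.2 hx).ne'
  have h1 := (hd2 hS hx).div (Real.hasDerivAt_sinh x) hs
  refine h1.congr_deriv ?_
  field_simp
  ring

lemma cont_integrand (hS : SolvesEq14 h) {s x : ℝ} (hs : 0 < s) (hsx : s ≤ x) :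
    ContinuousOn (fun t => -(Real.sin (2 * h t) / Real.sinh t)) (Icc s x) := by
  have hsub : Icc s x ⊆ Ioi 0 := fun t ht => lt_of_lt_of_le hs ht.1
  have c1 : ContinuousOn (fun t => Real.sin (2 * h t)) (Icc s x) :=
    Real.continuous_sin.comp_continuousOn (continuousOn_const.mul ((hcont hS).mono hsub))
  exact (c1.div (Real.continuous_sinh.continuousOn) fun t ht =>
    (Real.sinh_pos_iff.2 (hsub ht)).ne').neg

lemma g_ftc (hS : SolvesEq14 h) {s x : ℝ} (hs : 0 < s) (hsx : s ≤ x) :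
    deriv h x / Real.sinh x - deriv h s / Real.sinh s
      = ∫ t in s..x, -(Real.sin (2 * h t) / Real.sinh t) := by
  have key := intervalIntegral.integral_eq_sub_of_hasDerivAt
    (f := fun y => deriv h y / Real.sinh y)
    (f' := fun t => -(Real.sin (2 * h t) / Real.sinh t)) (a := s) (b := x)
    (fun t ht => ?_) ?_
  · rw [key]
  · rw [uIcc_of_le hsx] at ht
    exact g_hasDeriv hS (lt_of_lt_of_le hs ht.1)
  · exact ContinuousOn.intervalIntegrable (by rw [uIcc_of_le hsx]; exact cont_integrand hS hs hsx)

lemma h_ftc (hS : SolvesEq14 h) {s x : ℝ} (hs : 0 < s) (hsx : s ≤ x) :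
    h x - h s = ∫ t in s..x, deriv h t := by
  refine (intervalIntegral.integral_eq_sub_of_hasDerivAt (fun t ht => ?_) ?_).symm
  · rw [uIcc_of_le hsx] at ht
    exact hd1 hS (lt_of_lt_of_le hs ht.1)
  · apply ContinuousOn.intervalIntegrable
    exact (hcont' hS).mono (by rw [uIcc_of_le hsx]; exact fun t ht => lt_of_lt_of_le hs ht.1)

lemma integral_linear (c : ℝ) {s x : ℝ} :
    ∫ t in s..x, c * t = c * x^2/2 - c * s^2/2 := by
  have key := intervalIntegral.integral_eq_sub_of_hasDerivAt (f := fun t : ℝ => c * t^2/2)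
    (f' := fun t : ℝ => c * t) (a := s) (b := x) (fun t _ => ?_) ?_
  · rw [key]
  · have h1 : HasDerivAt (fun t : ℝ => t^2) (2 * t) t := by
      simpa using hasDerivAt_pow 2 t
    have := (h1.const_mul c).div_const 2
    exact this.congr_deriv (by ring)
  · exact (continuous_const.mul continuous_id).intervalIntegrable _ _

lemma integral_sinh' {s x : ℝ} : ∫ t in s..x, Real.sinh t = Real.cosh x - Real.cosh s := by
  have key := intervalIntegral.integral_eq_sub_of_hasDerivAt (f := Real.cosh)
    (f' := Real.sinh) (a := s) (b := x) (fun t _ => Real.hasDerivAt_cosh t)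
    (Real.continuous_sinh.intervalIntegrable _ _)
  rw [key]

lemma integral_csinh (D : ℝ) {s x : ℝ} :
    ∫ t in s..x, D * Real.sinh t = D * Real.cosh x - D * Real.cosh s := by
  have key := intervalIntegral.integral_eq_sub_of_hasDerivAt
    (f := fun t => D * Real.cosh t) (f' := fun t => D * Real.sinh t) (a := s) (b := x)
    (fun t _ => (Real.hasDerivAt_cosh t).const_mul D)
    ((continuous_const.mul Real.continuous_sinh).intervalIntegrable _ _)
  rw [key]

/-- Variation bound for `g = h'/sinh`. -/
lemma g_var (hS : SolvesEq14 h) {s x C : ℝ} (hs : 0 < s) (hsx : s ≤ x) (hC : 0 ≤ C)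
    (hh : ∀ t ∈ Icc s x, |h t| ≤ C * t^2) :
    |deriv h x / Real.sinh x - deriv h s / Real.sinh s| ≤ C * (x^2 - s^2) := by
  rw [g_ftc hS hs hsx]
  have hbnd : ∀ t ∈ Icc s x, |(-(Real.sin (2 * h t) / Real.sinh t))| ≤ 2 * C * t := by
    intro t ht
    have ht0 : 0 < t := lt_of_lt_of_le hs ht.1
    have hsinh : 0 < Real.sinh t := Real.sinh_pos_iff.2 ht0
    have h1 : |Real.sin (2 * h t)| ≤ 2 * |h t| := by
      calc |Real.sin (2 * h t)| ≤ |2 * h t| := Real.abs_sin_le_abs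
      _ = 2 * |h t| := by rw [abs_mul]; norm_num
    have h2 : |h t| ≤ C * t^2 := hh t ht
    have hts : t ≤ Real.sinh t := Real.self_le_sinh_iff.2 ht0.le
    rw [abs_neg, abs_div, abs_of_pos hsinh]
    rw [div_le_iff₀ hsinh]
    have h3 : C * t * t ≤ C * t * Real.sinh t :=
      mul_le_mul_of_nonneg_left hts (mul_nonneg hC ht0.le)
    nlinarith
  have hint : IntervalIntegrable (fun t => -(Real.sin (2 * h t) / Real.sinh t)) volume s x :=
    ContinuousOn.intervalIntegrable (by rw [uIcc_of_le hsx]; exact cont_integrand hS hs hsx)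
  have hintb : IntervalIntegrable (fun t => 2 * C * t) volume s x :=
    (continuous_const.mul continuous_id).intervalIntegrable _ _
  have hintb' : IntervalIntegrable (fun t => -(2 * C * t)) volume s x :=
    ((continuous_const.mul continuous_id).neg).intervalIntegrable _ _
  have hup := intervalIntegral.integral_mono_on hsx hint hintb
    (fun t ht => (abs_le.1 (hbnd t ht)).2)
  have hdown := intervalIntegral.integral_mono_on hsx hintb' hint
    (fun t ht => (abs_le.1 (hbnd t ht)).1)
  rw [integral_linear] at hup
  have : ∫ t in s..x, -(2 * C * t) = -(2 * C * x^2/2 - 2 * C * s^2/2) := by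
    rw [intervalIntegral.integral_neg, integral_linear]
  rw [this] at hdown
  rw [abs_le]; constructor <;> nlinarith

/-- Step bound for `h` given bounds on `g - K`. -/
lemma h_step (hS : SolvesEq14 h) {s x K D : ℝ} (hs : 0 < s) (hsx : s ≤ x) (hD : 0 ≤ D)
    (hg : ∀ t ∈ Icc s x, |deriv h t / Real.sinh t - K| ≤ D) :
    |h x - h s - K * (Real.cosh x - Real.cosh s)| ≤ D * (Real.cosh x - Real.cosh s) := by
  have hbnd : ∀ t ∈ Icc s x, |deriv h t - K * Real.sinh t| ≤ D * Real.sinh t := by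
    intro t ht
    have ht0 : 0 < t := lt_of_lt_of_le hs ht.1
    have hsinh : 0 < Real.sinh t := Real.sinh_pos_iff.2 ht0
    have h1 := hg t ht
    have h2 : deriv h t - K * Real.sinh t = (deriv h t / Real.sinh t - K) * Real.sinh t := by
      field_simp
    rw [h2, abs_mul, abs_of_pos hsinh]
    exact mul_le_mul_of_nonneg_right h1 hsinh.le
  have hsub : Icc s x ⊆ Ioi 0 := fun t ht => lt_of_lt_of_le hs ht.1
  have hcint : IntervalIntegrable (fun t => deriv h t - K * Real.sinh t) volume s x := by
    apply ContinuousOn.intervalIntegrable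
    rw [uIcc_of_le hsx]
    exact ((hcont' hS).mono hsub).sub (continuous_const.mul Real.continuous_sinh).continuousOn
  have hbint : IntervalIntegrable (fun t => D * Real.sinh t) volume s x :=
    (continuous_const.mul Real.continuous_sinh).intervalIntegrable _ _
  have hkey : ∫ t in s..x, (deriv h t - K * Real.sinh t)
      = h x - h s - K * (Real.cosh x - Real.cosh s) := by
    rw [intervalIntegral.integral_sub, ← h_ftc hS hs hsx, integral_csinh]
    · ring
    · apply ContinuousOn.intervalIntegrable
      exact (hcont' hS).mono (by rw [uIcc_of_le hsx]; exact hsub)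
    · exact (continuous_const.mul Real.continuous_sinh).intervalIntegrable _ _
  have hup := intervalIntegral.integral_mono_on hsx hcint hbint
    (fun t ht => (abs_le.1 (hbnd t ht)).2)
  have hbint' : IntervalIntegrable (fun t => -(D * Real.sinh t)) volume s x :=
    ((continuous_const.mul Real.continuous_sinh).neg).intervalIntegrable _ _
  have hdown := intervalIntegral.integral_mono_on hsx hbint' hcint
    (fun t ht => (abs_le.1 (hbnd t ht)).1)
  rw [hkey, integral_csinh] at hup
  have : ∫ t in s..x, -(D * Real.sinh t) = -(D * Real.cosh x - D * Real.cosh s) := by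
    rw [intervalIntegral.integral_neg, integral_csinh]
  rw [hkey, this] at hdown
  rw [abs_le]; constructor <;> linarith


lemma tendsto_h_zero {b : ℝ} (htend : Tendsto (fun x => h x / x ^ 2) (𝓝[>] (0:ℝ)) (𝓝 b)) :
    Tendsto h (𝓝[>] (0:ℝ)) (𝓝 0) := by
  have h2 : Tendsto (fun t : ℝ => t^2) (𝓝[>] (0:ℝ)) (𝓝 0) := by
    have : Tendsto (fun t : ℝ => t^2) (𝓝 (0:ℝ)) (𝓝 0) := by
      simpa using (continuous_pow 2).tendsto (0:ℝ)
    exact this.mono_left nhdsWithin_le_nhds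
  have hmul := htend.mul h2
  rw [mul_zero] at hmul
  refine hmul.congr' ?_
  filter_upwards [self_mem_nhdsWithin] with t ht
  exact div_mul_cancel₀ _ (pow_ne_zero 2 (ne_of_gt ht))

lemma cosh_tendsto_one : Tendsto (fun τ : ℝ => Real.cosh τ) (𝓝[>] (0:ℝ)) (𝓝 1) := by
  have : Tendsto Real.cosh (𝓝 (0:ℝ)) (𝓝 1) := by
    simpa using Real.continuous_cosh.tendsto (0:ℝ)
  exact this.mono_left nhdsWithin_le_nhds

lemma pivot {b : ℝ} (hb : 0 < b) (hS : SolvesEq14 h)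
    (htend : Tendsto (fun x => h x / x ^ 2) (𝓝[>] (0:ℝ)) (𝓝 b)) :
    ∃ a : ℝ, 0 < a ∧ a ≤ 1/10 ∧ (∀ t ∈ Ioc (0:ℝ) a, |h t| ≤ (101/100)*b*t^2) ∧
      |deriv h a / Real.sinh a| ≤ (21/10)*b := by
  -- Step A
  have hev : ∀ᶠ t in 𝓝[>] (0:ℝ), |h t / t^2 - b| < b/100 := by
    have := htend.eventually (Metric.ball_mem_nhds b (show (0:ℝ) < b/100 by positivity))
    simpa [Metric.mem_ball, Real.dist_eq] using this
  rw [Filter.eventually_iff, mem_nhdsGT_iff_exists_Ioc_subset] at hev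
  obtain ⟨u, hu, hsubU⟩ := hev
  rw [mem_Ioi] at hu
  set a := min u (1/10) with ha_def
  have ha0 : 0 < a := lt_min hu (by norm_num)
  have ha1 : a ≤ 1/10 := min_le_right _ _
  have hbase : ∀ t ∈ Ioc (0:ℝ) a, |h t| ≤ (101/100)*b*t^2 := by
    intro t ht
    have htu : t ∈ Ioc (0:ℝ) u := ⟨ht.1, le_trans ht.2 (min_le_left _ _)⟩
    have h1 : |h t / t^2 - b| < b/100 := hsubU htu
    have ht0 : (0:ℝ) < t := ht.1
    have ht2 : (0:ℝ) < t^2 := by positivity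
    have heq2 : h t = (h t / t^2) * t^2 := by
      field_simp
    rw [heq2, abs_mul, abs_of_pos ht2]
    have : |h t / t^2| ≤ (101/100)*b := by
      have := abs_sub_abs_le_abs_sub (h t / t^2) b
      rw [abs_of_pos hb] at this
      linarith [le_of_lt h1, this]
    nlinarith
  refine ⟨a, ha0, ha1, hbase, ?_⟩
  -- Step C
  set ga := deriv h a / Real.sinh a with hga_def
  have hkey : ∀ τ ∈ Ioo (0:ℝ) a,
      |h a - h τ - ga*(Real.cosh a - Real.cosh τ)|
        ≤ ((101/100)*b*a^2)*(Real.cosh a - Real.cosh τ) := by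
    intro τ hτ
    apply h_step hS hτ.1 hτ.2.le (by positivity)
    intro t ht
    have ht0 : 0 < t := lt_of_lt_of_le hτ.1 ht.1
    have hvar := g_var hS ht0 ht.2 (C := (101/100)*b) (by positivity)
      (fun r hr => hbase r ⟨lt_of_lt_of_le ht0 hr.1, hr.2⟩)
    rw [abs_sub_comm] at hvar
    have : (101/100)*b*(a^2 - t^2) ≤ (101/100)*b*a^2 := by nlinarith [sq_nonneg t]
    linarith
  have hIoo : Ioo (0:ℝ) a ∈ 𝓝[>] (0:ℝ) := Ioo_mem_nhdsGT_of_mem ⟨le_refl 0, ha0⟩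
  have h1 : Tendsto (fun τ => |h a - h τ - ga*(Real.cosh a - Real.cosh τ)|) (𝓝[>] (0:ℝ))
      (𝓝 (|h a - 0 - ga*(Real.cosh a - 1)|)) :=
    ((tendsto_const_nhds.sub (tendsto_h_zero htend)).sub
      ((tendsto_const_nhds.sub cosh_tendsto_one).const_mul ga)).abs
  have h2 : Tendsto (fun τ => ((101/100)*b*a^2)*(Real.cosh a - Real.cosh τ)) (𝓝[>] (0:ℝ))
      (𝓝 (((101/100)*b*a^2)*(Real.cosh a - 1))) :=
    (tendsto_const_nhds.sub cosh_tendsto_one).const_mul _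
  have h3 : |h a - 0 - ga*(Real.cosh a - 1)| ≤ ((101/100)*b*a^2)*(Real.cosh a - 1) := by
    refine le_of_tendsto_of_tendsto h1 h2 ?_
    filter_upwards [hIoo] with τ hτ
    exact hkey τ hτ
  rw [sub_zero] at h3
  have hca : a^2/2 ≤ Real.cosh a - 1 := cosh_sub_one_ge ha0.le
  have hc0 : 0 < Real.cosh a - 1 := lt_of_lt_of_le (by positivity) hca
  have habs : |h a| ≤ (101/100)*b*a^2 := hbase a ⟨ha0, le_refl a⟩
  have h4 : |ga| * (Real.cosh a - 1) ≤ (101/100)*b*a^2 + (101/100)*b*a^2*(Real.cosh a - 1) := by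
    have e1 : |ga * (Real.cosh a - 1)| = |ga| * (Real.cosh a - 1) := by
      rw [abs_mul, abs_of_pos hc0]
    have e2 : |ga * (Real.cosh a - 1)| ≤ |h a| + |h a - ga*(Real.cosh a - 1)| := by
      have := abs_sub (h a) (h a - ga*(Real.cosh a - 1))
      calc |ga * (Real.cosh a - 1)| = |h a - (h a - ga*(Real.cosh a - 1))| := by ring_nf
      _ ≤ |h a| + |h a - ga*(Real.cosh a - 1)| := abs_sub _ _
    linarith [e2, e1.symm.le, habs, h3]
  have hga_abs : 0 ≤ |ga| := abs_nonneg _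
  have ha2 : a^2 ≤ 1/100 := by nlinarith
  nlinarith [h4, hca, mul_le_mul_of_nonneg_left hca hga_abs, mul_pos hb hc0,
    mul_le_mul_of_nonneg_right ha2 (mul_pos hb hc0).le]


lemma bootstrap {b : ℝ} (hb : 0 < b) (hS : SolvesEq14 h)
    (htend : Tendsto (fun x => h x / x ^ 2) (𝓝[>] (0:ℝ)) (𝓝 b)) :
    (∀ t ∈ Ioc (0:ℝ) 1, |h t| ≤ 10*b*t^2) ∧ |h 1| ≤ 10*b ∧ |deriv h 1| ≤ 15*b := by
  obtain ⟨a, ha0, ha1, hbase, hga⟩ := pivot hb hS htend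
  have ha1' : a ≤ 1 := le_trans ha1 (by norm_num)
  -- improvement step
  have himp : ∀ x ∈ Icc a 1, (∀ t ∈ Ioc (0:ℝ) x, |h t| ≤ 10*b*t^2) →
      ∀ t ∈ Icc a x, |h t| ≤ 7*b*t^2 := by
    intro x hx hyp t htx
    have ht0 : 0 < t := lt_of_lt_of_le ha0 htx.1
    have htx1 : t ≤ 1 := le_trans htx.2 hx.2
    -- bound |g τ| on [a,t]
    have hgb : ∀ τ ∈ Icc a t, |deriv h τ / Real.sinh τ| ≤ (21/10)*b + 10*b*τ^2 := by
      intro τ hτ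
      have hτ0 : 0 < τ := lt_of_lt_of_le ha0 hτ.1
      have hvar := g_var hS ha0 hτ.1 (C := 10*b) (by positivity)
        (fun r hr => hyp r ⟨lt_of_lt_of_le ha0 hr.1, le_trans hr.2 (le_trans hτ.2 htx.2)⟩)
      have htri := abs_sub (deriv h τ / Real.sinh τ) (deriv h τ / Real.sinh τ - deriv h a / Real.sinh a)
      have e1 : deriv h τ / Real.sinh τ - (deriv h τ / Real.sinh τ - deriv h a / Real.sinh a)
          = deriv h a / Real.sinh a := by ring
      have e2 : |deriv h τ / Real.sinh τ| ≤ |deriv h τ / Real.sinh τ - deriv h a / Real.sinh a|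
          + |deriv h a / Real.sinh a| := by
        calc |deriv h τ / Real.sinh τ|
            = |(deriv h τ / Real.sinh τ - deriv h a / Real.sinh a) + deriv h a / Real.sinh a| := by
              ring_nf
        _ ≤ _ := abs_add_le _ _
      nlinarith [sq_nonneg a]
    -- bound |deriv h τ|
    have hb1 : ∀ τ ∈ Icc a t, |deriv h τ| ≤ Real.cosh 1 * ((21/10)*b*τ + 10*b*τ^3) := by
      intro τ hτ
      have hτ0 : 0 < τ := lt_of_lt_of_le ha0 hτ.1
      have hτ1 : τ ≤ 1 := le_trans hτ.2 htx1
      have hsinh : 0 < Real.sinh τ := Real.sinh_pos_iff.2 hτ0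
      have hlin : Real.sinh τ ≤ Real.cosh 1 * τ := sinh_le_linear hτ0.le hτ1
      have e1 : deriv h τ = (deriv h τ / Real.sinh τ) * Real.sinh τ := by field_simp
      rw [e1, abs_mul, abs_of_pos hsinh]
      have hg := hgb τ hτ
      have h2 : |deriv h τ / Real.sinh τ| * Real.sinh τ
          ≤ ((21/10)*b + 10*b*τ^2) * (Real.cosh 1 * τ) := by
        apply mul_le_mul hg hlin hsinh.le (by positivity)
      calc |deriv h τ / Real.sinh τ| * Real.sinh τ ≤ ((21/10)*b + 10*b*τ^2) * (Real.cosh 1 * τ) := h2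
      _ = Real.cosh 1 * ((21/10)*b*τ + 10*b*τ^3) := by ring
    -- integrate: |h t - h a| ≤ F t - F a
    have hFd : ∀ τ : ℝ, HasDerivAt (fun τ => Real.cosh 1 * ((21/10)*b*τ^2/2 + 10*b*τ^4/4))
        (Real.cosh 1 * ((21/10)*b*τ + 10*b*τ^3)) τ := by
      intro τ
      have p2 : HasDerivAt (fun τ : ℝ => τ^2) (2*τ) τ := by simpa using hasDerivAt_pow 2 τ
      have p4 : HasDerivAt (fun τ : ℝ => τ^4) (4*τ^3) τ := by simpa using hasDerivAt_pow 4 τ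
      have := (((p2.const_mul ((21/10)*b)).div_const 2).add
        ((p4.const_mul (10*b)).div_const 4)).const_mul (Real.cosh 1)
      exact this.congr_deriv (by ring)
    have hintF : ∫ τ in a..t, Real.cosh 1 * ((21/10)*b*τ + 10*b*τ^3)
        = (Real.cosh 1 * ((21/10)*b*t^2/2 + 10*b*t^4/4))
          - (Real.cosh 1 * ((21/10)*b*a^2/2 + 10*b*a^4/4)) := by
      have key := intervalIntegral.integral_eq_sub_of_hasDerivAt
        (f := fun τ => Real.cosh 1 * ((21/10)*b*τ^2/2 + 10*b*τ^4/4))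
        (f' := fun τ => Real.cosh 1 * ((21/10)*b*τ + 10*b*τ^3)) (a := a) (b := t)
        (fun τ _ => hFd τ) ?_
      · exact key
      · exact (continuous_const.mul ((continuous_const.mul continuous_id).add
          (continuous_const.mul (continuous_pow 3)))).intervalIntegrable _ _
    have hderiv_int : IntervalIntegrable (deriv h) volume a t := by
      apply ContinuousOn.intervalIntegrable
      rw [uIcc_of_le htx.1]
      exact (hcont' hS).mono (fun r hr => lt_of_lt_of_le ha0 hr.1)
    have hbound_int : IntervalIntegrable (fun τ => Real.cosh 1 * ((21/10)*b*τ + 10*b*τ^3)) volume a t :=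
      (continuous_const.mul ((continuous_const.mul continuous_id).add
        (continuous_const.mul (continuous_pow 3)))).intervalIntegrable _ _
    have hbound_int' : IntervalIntegrable (fun τ => -(Real.cosh 1 * ((21/10)*b*τ + 10*b*τ^3))) volume a t :=
      (continuous_const.mul ((continuous_const.mul continuous_id).add
        (continuous_const.mul (continuous_pow 3)))).neg.intervalIntegrable _ _
    have hup := intervalIntegral.integral_mono_on htx.1 hderiv_int hbound_int
      (fun τ hτ => (abs_le.1 (hb1 τ hτ)).2)
    have hdown := intervalIntegral.integral_mono_on htx.1 hbound_int' hderiv_int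
      (fun τ hτ => (abs_le.1 (hb1 τ hτ)).1)
    rw [← h_ftc hS ha0 htx.1] at hup hdown
    rw [hintF] at hup
    have hneg : ∫ τ in a..t, -(Real.cosh 1 * ((21/10)*b*τ + 10*b*τ^3))
        = -((Real.cosh 1 * ((21/10)*b*t^2/2 + 10*b*t^4/4))
          - (Real.cosh 1 * ((21/10)*b*a^2/2 + 10*b*a^4/4))) := by
      rw [intervalIntegral.integral_neg, hintF]
    rw [hneg] at hdown
    -- conclude
    have habs_a : |h a| ≤ (101/100)*b*a^2 := hbase a ⟨ha0, le_refl a⟩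
    have hch : Real.cosh 1 < 1.6 := cosh_one_lt
    have hch0 : (0:ℝ) < Real.cosh 1 := Real.cosh_pos 1
    have hat : a ≤ t := htx.1
    have haa : 0 < a := ha0
    rw [abs_le] at habs_a
    rw [abs_le]
    have ht2 : t^2 ≤ 1 := by nlinarith
    have ht4 : t^4 ≤ t^2 := by nlinarith [mul_nonneg (sq_nonneg t) (sub_nonneg.2 ht2)]
    have ha2t : a^2 ≤ t^2 := by nlinarith
    have hFa : (0:ℝ) ≤ Real.cosh 1 * ((21/10)*b*a^2/2 + 10*b*a^4/4) := by positivity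
    have hinner : (21/10)*b*t^2/2 + 10*b*t^4/4 ≤ (71/20)*b*t^2 := by nlinarith
    have hinner0 : (0:ℝ) ≤ (21/10)*b*t^2/2 + 10*b*t^4/4 := by positivity
    have h16 : Real.cosh 1 ≤ (8/5:ℝ) := by norm_num at hch; linarith
    have hFt : Real.cosh 1 * ((21/10)*b*t^2/2 + 10*b*t^4/4) ≤ (8/5) * ((71/20)*b*t^2) :=
      mul_le_mul h16 hinner hinner0 (by norm_num)
    constructor <;> linarith [mul_le_mul_of_nonneg_left ha2t hb.le]
  -- continuous induction via sSup
  have hhc : ∀ {y : ℝ}, 0 < y → ContinuousAt h y := fun {y} hy =>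
    (hcont hS).continuousAt (isOpen_Ioi.mem_nhds hy)
  set S : Set ℝ := {x | x ∈ Icc a 1 ∧ ∀ t ∈ Ioc (0:ℝ) x, |h t| ≤ 10*b*t^2} with hS_def
  have haS : a ∈ S := by
    refine ⟨⟨le_refl a, ha1'⟩, fun t ht => ?_⟩
    have := hbase t ht
    nlinarith [sq_nonneg t]
  have hSne : S.Nonempty := ⟨a, haS⟩
  have hSbdd : BddAbove S := ⟨1, fun y hy => hy.1.2⟩
  set T := sSup S with hT_def
  have haT : a ≤ T := le_csSup hSbdd haS
  have hT1 : T ≤ 1 := csSup_le hSne (fun y hy => hy.1.2)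
  have hT0 : 0 < T := lt_of_lt_of_le ha0 haT
  have hTlt : ∀ t, 0 < t → t < T → |h t| ≤ 10*b*t^2 := by
    intro t ht0 htT
    obtain ⟨y, hyS, hty⟩ := exists_lt_of_lt_csSup hSne htT
    exact hyS.2 t ⟨ht0, hty.le⟩
  have hTS : T ∈ S := by
    refine ⟨⟨haT, hT1⟩, fun t ht => ?_⟩
    rcases lt_or_eq_of_le ht.2 with hlt | heq
    · exact hTlt t ht.1 hlt
    · subst heq
      -- continuity argument at T
      have hcT : ContinuousAt (fun τ => 10*b*τ^2 - |h τ|) T :=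
        ((continuousAt_const.mul ((continuous_pow 2).continuousAt (x := T))).sub (hhc hT0).abs)
      have hne : (𝓝[<] T).NeBot := nhdsLT_neBot T
      have hev : ∀ᶠ τ in 𝓝[<] T, 0 ≤ 10*b*τ^2 - |h τ| := by
        filter_upwards [Ioo_mem_nhdsLT_of_mem (show T ∈ Ioc 0 T from ⟨hT0, le_refl T⟩)]
          with τ hτ
        have := hTlt τ hτ.1 hτ.2
        linarith
      have hlim : Tendsto (fun τ => 10*b*τ^2 - |h τ|) (𝓝[<] T) (𝓝 (10*b*T^2 - |h T|)) :=
        (hcT.tendsto).mono_left nhdsWithin_le_nhds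
      have := ge_of_tendsto hlim hev
      linarith
  have hT_eq : T = 1 := by
    by_contra hne
    have hTlt1 : T < 1 := lt_of_le_of_ne hT1 hne
    have h7 : |h T| ≤ 7*b*T^2 := himp T ⟨haT, hT1⟩ hTS.2 T ⟨haT, le_refl T⟩
    have hcT : ContinuousAt (fun τ => 10*b*τ^2 - |h τ|) T :=
      ((continuousAt_const.mul ((continuous_pow 2).continuousAt (x := T))).sub (hhc hT0).abs)
    have hpos : 0 < 10*b*T^2 - |h T| := by nlinarith [sq_nonneg T, mul_pos hb (mul_pos hT0 hT0)]
    have hev : ∀ᶠ τ in 𝓝 T, 0 < 10*b*τ^2 - |h τ| :=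
      hcT.tendsto.eventually (eventually_gt_nhds hpos)
    rw [Metric.eventually_nhds_iff] at hev
    obtain ⟨ε, hε, hball⟩ := hev
    set T' := min (T + ε/2) 1 with hT'_def
    have hTT' : T < T' := lt_min (by linarith) hTlt1
    have hT'S : T' ∈ S := by
      refine ⟨⟨le_trans haT hTT'.le, min_le_right _ _⟩, fun t ht => ?_⟩
      rcases le_or_gt t T with hle | hgt
      · exact hTS.2 t ⟨ht.1, hle⟩
      · have hband : dist t T < ε := by
          rw [Real.dist_eq, abs_of_pos (by linarith : (0:ℝ) < t - T)]
          have : t ≤ T + ε/2 := le_trans ht.2 (min_le_left _ _)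
          linarith
        have := hball hband
        linarith
    have := le_csSup hSbdd hT'S
    rw [← hT_def] at this
    linarith
  have hboot : ∀ t ∈ Ioc (0:ℝ) 1, |h t| ≤ 10*b*t^2 := by
    rw [hT_eq] at hTS
    exact hTS.2
  -- endpoint values
  have hh1 : |h 1| ≤ 10*b := by
    have := hboot 1 ⟨by norm_num, le_refl 1⟩
    norm_num at this ⊢
    linarith
  refine ⟨hboot, hh1, ?_⟩
  have hvar := g_var hS ha0 ha1' (C := 10*b) (by positivity)
    (fun r hr => hboot r ⟨lt_of_lt_of_le ha0 hr.1, hr.2⟩)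
  have hg1 : |deriv h 1 / Real.sinh 1| ≤ (121/10)*b := by
    have e2 : |deriv h 1 / Real.sinh 1| ≤ |deriv h 1 / Real.sinh 1 - deriv h a / Real.sinh a|
        + |deriv h a / Real.sinh a| := by
      calc |deriv h 1 / Real.sinh 1|
          = |(deriv h 1 / Real.sinh 1 - deriv h a / Real.sinh a) + deriv h a / Real.sinh a| := by
            ring_nf
      _ ≤ _ := abs_add_le _ _
    nlinarith [sq_nonneg a]
  have hs1 : 0 < Real.sinh 1 := Real.sinh_pos_iff.2 (by norm_num)
  have e1 : deriv h 1 = (deriv h 1 / Real.sinh 1) * Real.sinh 1 := by field_simp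
  rw [e1, abs_mul, abs_of_pos hs1]
  have hsl : Real.sinh 1 < 1.2 := sinh_one_lt
  nlinarith [abs_nonneg (deriv h 1 / Real.sinh 1), mul_le_mul hg1 hsl.le hs1.le (by positivity)]


lemma global_small {b : ℝ} (hb : 0 < b) (hS : SolvesEq14 h)
    (htend : Tendsto (fun x => h x / x ^ 2) (𝓝[>] (0:ℝ)) (𝓝 b)) {R : ℝ} (hR : 1 ≤ R) :
    ∀ x, 0 < x → x ≤ R → |h x| ≤ 15 * b * Real.exp (4*(R-1)) := by
  obtain ⟨hboot, hh1, hdh1⟩ := bootstrap hb hS htend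
  have hexp1 : (1:ℝ) ≤ Real.exp (4*(R-1)) := by
    have := Real.add_one_le_exp (4*(R-1))
    linarith
  -- Gronwall on [1, R]
  set f : ℝ → ℝ × ℝ := fun t => (h t, deriv h t) with hf_def
  set f' : ℝ → ℝ × ℝ := fun t =>
    (deriv h t, (Real.cosh t / Real.sinh t) * deriv h t - Real.sin (2 * h t)) with hf'_def
  have hsub : Icc (1:ℝ) R ⊆ Ioi 0 := fun t ht => lt_of_lt_of_le (by norm_num) ht.1
  have hcontf : ContinuousOn f (Icc 1 R) :=
    ((hcont hS).mono hsub).prodMk ((hcont' hS).mono hsub)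
  have hder : ∀ t ∈ Ico (1:ℝ) R, HasDerivWithinAt f (f' t) (Ici t) t := by
    intro t ht
    have ht0 : (0:ℝ) < t := lt_of_lt_of_le (by norm_num) ht.1
    exact ((hd1 hS ht0).prodMk (hd2 hS ht0)).hasDerivWithinAt
  have hinit : ‖f 1‖ ≤ 15 * b := by
    rw [Prod.norm_def]
    apply max_le
    · rw [Real.norm_eq_abs]; simp only [hf_def]; linarith
    · rw [Real.norm_eq_abs]; simp only [hf_def]; exact hdh1
  have hbnd : ∀ t ∈ Ico (1:ℝ) R, ‖f' t‖ ≤ 4 * ‖f t‖ + 0 := by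
    intro t ht
    have ht0 : (0:ℝ) < t := lt_of_lt_of_le (by norm_num) ht.1
    have hsinh : 0 < Real.sinh t := Real.sinh_pos_iff.2 ht0
    have hcoth : Real.cosh t / Real.sinh t ≤ 2 := by
      rw [div_le_iff₀ hsinh]
      have := cosh_le_two_sinh ht.1
      linarith
    have hcoth0 : 0 < Real.cosh t / Real.sinh t := div_pos (Real.cosh_pos t) hsinh
    have hsin : |Real.sin (2 * h t)| ≤ 2 * |h t| := by
      calc |Real.sin (2 * h t)| ≤ |2 * h t| := Real.abs_sin_le_abs
      _ = 2 * |h t| := by rw [abs_mul]; norm_num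
    rw [Prod.norm_def, Prod.norm_def]
    simp only [hf_def, hf'_def, Real.norm_eq_abs]
    have h1 : |h t| ≤ max |h t| |deriv h t| := le_max_left _ _
    have h2 : |deriv h t| ≤ max |h t| |deriv h t| := le_max_right _ _
    have h0 : (0:ℝ) ≤ max |h t| |deriv h t| := le_trans (abs_nonneg _) h1
    apply max_le
    · linarith
    · have : |(Real.cosh t / Real.sinh t) * deriv h t - Real.sin (2 * h t)|
          ≤ |(Real.cosh t / Real.sinh t) * deriv h t| + |Real.sin (2 * h t)| := abs_sub _ _
      rw [abs_mul, abs_of_pos hcoth0] at this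
      nlinarith [abs_nonneg (deriv h t)]
  have hgr := norm_le_gronwallBound_of_norm_deriv_right_le hcontf hder hinit hbnd
  intro x hx0 hxR
  rcases le_or_gt x 1 with hx1 | hx1
  · have := hboot x ⟨hx0, hx1⟩
    have hx2 : x^2 ≤ 1 := by nlinarith
    nlinarith [mul_le_mul_of_nonneg_left hexp1 (by positivity : (0:ℝ) ≤ 15*b),
      mul_le_mul_of_nonneg_left hx2 (by positivity : (0:ℝ) ≤ 10*b)]
  · have hmem : x ∈ Icc (1:ℝ) R := ⟨hx1.le, hxR⟩
    have := hgr x hmem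
    rw [gronwallBound_ε0] at this
    have hfst : |h x| ≤ ‖f x‖ := by
      have := norm_fst_le (f x)
      simpa [hf_def, Real.norm_eq_abs] using this
    have hexp_mono : Real.exp (4*(x-1)) ≤ Real.exp (4*(R-1)) :=
      Real.exp_le_exp.2 (by linarith)
    have h15 : (0:ℝ) ≤ 15 * b := by positivity
    calc |h x| ≤ ‖f x‖ := hfst
    _ ≤ 15*b * Real.exp (4*(x-1)) := this
    _ ≤ 15*b * Real.exp (4*(R-1)) := mul_le_mul_of_nonneg_left hexp_mono h15

def wf (α x : ℝ) : ℝ := Real.sqrt (Real.sinh x) * Real.sin (x - α)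

def W1f (α x : ℝ) : ℝ :=
  Real.cosh x / (2 * Real.sqrt (Real.sinh x)) * Real.sin (x - α)
    + Real.sqrt (Real.sinh x) * Real.cos (x - α)

def W2f (α x : ℝ) : ℝ :=
  ((Real.sinh x * (2 * Real.sqrt (Real.sinh x))
      - Real.cosh x * (2 * (Real.cosh x / (2 * Real.sqrt (Real.sinh x)))))
      / (2 * Real.sqrt (Real.sinh x))^2) * Real.sin (x - α)
    + Real.cosh x / (2 * Real.sqrt (Real.sinh x)) * Real.cos (x - α)
    + (Real.cosh x / (2 * Real.sqrt (Real.sinh x)) * Real.cos (x - α)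
      + Real.sqrt (Real.sinh x) * (-Real.sin (x - α)))

def Bf (h : ℝ → ℝ) (α x : ℝ) : ℝ :=
  (deriv h x * wf α x - W1f α x * h x) / Real.sinh x

def Bdf (h : ℝ → ℝ) (α x : ℝ) : ℝ :=
  ((((Real.cosh x / Real.sinh x) * deriv h x - Real.sin (2 * h x)) * wf α x
      + deriv h x * W1f α x - (W2f α x * h x + W1f α x * deriv h x)) * Real.sinh x
    - (deriv h x * wf α x - W1f α x * h x) * Real.cosh x) / Real.sinh x ^ 2

lemma hm_deriv {x : ℝ} (hx : 0 < x) :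
    HasDerivAt (fun y => Real.sqrt (Real.sinh y))
      (Real.cosh x / (2 * Real.sqrt (Real.sinh x))) x := by
  have hsp : 0 < Real.sinh x := Real.sinh_pos_iff.2 hx
  have := (Real.hasDerivAt_sqrt hsp.ne').comp x (Real.hasDerivAt_sinh x)
  exact this.congr_deriv (by ring)

lemma hsin_deriv (α x : ℝ) :
    HasDerivAt (fun y => Real.sin (y - α)) (Real.cos (x - α)) x := by
  have := (Real.hasDerivAt_sin (x - α)).comp x ((hasDerivAt_id x).sub_const α)
  exact this.congr_deriv (mul_one _)

lemma hcos_deriv (α x : ℝ) :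
    HasDerivAt (fun y => Real.cos (y - α)) (-Real.sin (x - α)) x := by
  have := (Real.hasDerivAt_cos (x - α)).comp x ((hasDerivAt_id x).sub_const α)
  exact this.congr_deriv (mul_one _)

lemma wf_deriv {α x : ℝ} (hx : 0 < x) : HasDerivAt (wf α) (W1f α x) x :=
  (hm_deriv hx).mul (hsin_deriv α x)

lemma W1f_deriv {α x : ℝ} (hx : 0 < x) : HasDerivAt (W1f α) (W2f α x) x := by
  have hsp : 0 < Real.sinh x := Real.sinh_pos_iff.2 hx
  have hq0 : 0 < Real.sqrt (Real.sinh x) := Real.sqrt_pos.2 hsp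
  have hne2 : 2 * Real.sqrt (Real.sinh x) ≠ 0 := by positivity
  have hv : HasDerivAt (fun y => 2 * Real.sqrt (Real.sinh y))
      (2 * (Real.cosh x / (2 * Real.sqrt (Real.sinh x)))) x := (hm_deriv hx).const_mul 2
  have hu : HasDerivAt (fun y => Real.cosh y / (2 * Real.sqrt (Real.sinh y)))
      ((Real.sinh x * (2 * Real.sqrt (Real.sinh x))
        - Real.cosh x * (2 * (Real.cosh x / (2 * Real.sqrt (Real.sinh x)))))
        / (2 * Real.sqrt (Real.sinh x))^2) x :=
    (Real.hasDerivAt_cosh x).div hv hne2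
  exact (hu.mul (hsin_deriv α x)).add ((hm_deriv hx).mul (hcos_deriv α x))

lemma Bf_deriv (hS : SolvesEq14 h) {α x : ℝ} (hx : 0 < x) :
    HasDerivAt (Bf h α) (Bdf h α x) x := by
  have hsp : 0 < Real.sinh x := Real.sinh_pos_iff.2 hx
  exact (((hd2 hS hx).mul (wf_deriv hx)).sub ((W1f_deriv hx).mul (hd1 hS hx))).div
    (Real.hasDerivAt_sinh x) hsp.ne'

lemma Bdf_eq (h : ℝ → ℝ) {α x : ℝ} (hx : 0 < x) :
    Bdf h α x = -(Real.sin (x - α)) * (4 * Real.sinh x^2 * Real.sin (2 * h x)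
      - (2 * Real.sinh x^2 + 3 * Real.cosh x^2) * h x)
      / (4 * (Real.sqrt (Real.sinh x))^3 * Real.sinh x) := by
  have hsp : 0 < Real.sinh x := Real.sinh_pos_iff.2 hx
  unfold Bdf wf W1f W2f
  set q := Real.sqrt (Real.sinh x) with hq_def
  have hq0 : 0 < q := Real.sqrt_pos.2 hsp
  have hq2 : q^2 = Real.sinh x := Real.sq_sqrt hsp.le
  rw [← hq2]
  field_simp
  ring

lemma sturm_pos (hS : SolvesEq14 h) {α : ℝ} (hα : 3 ≤ α)
    (hpos : ∀ x ∈ Icc α (α + π), 0 < h x)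
    (hsmall : ∀ x ∈ Icc α (α + π), h x ≤ π/4) : False := by
  have hπ : 0 < π := Real.pi_pos
  have hαπ : α ≤ α + π := by linarith
  have hx0 : ∀ x ∈ Icc α (α + π), (0:ℝ) < x := fun x hx => lt_of_lt_of_le (by linarith) hx.1
  -- B' ≤ 0 on the interval
  have hBd_le : ∀ x ∈ Icc α (α + π), Bdf h α x ≤ 0 := by
    intro x hx
    have hx0' : 0 < x := hx0 x hx
    have hx3 : 3 ≤ x := le_trans hα hx.1
    have hsp : 0 < Real.sinh x := Real.sinh_pos_iff.2 hx0'
    have hq0 : 0 < Real.sqrt (Real.sinh x) := Real.sqrt_pos.2 hsp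
    rw [Bdf_eq h hx0']
    have hsin_nonneg : 0 ≤ Real.sin (x - α) :=
      Real.sin_nonneg_of_nonneg_of_le_pi (by linarith [hx.1]) (by linarith [hx.2])
    have hsinh3 : (9:ℝ) ≤ Real.sinh x := by
      have h1 : Real.sinh 3 ≤ Real.sinh x := by
        rw [Real.sinh_le_sinh]; exact hx3
      linarith [sinh_three_ge]
    have hh_pos : 0 < h x := hpos x hx
    have hh_small : h x ≤ π/4 := hsmall x hx
    have hjordan : 2/π * (2 * h x) ≤ Real.sin (2 * h x) :=
      Real.mul_le_sin (by linarith) (by linarith)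
    have hπ315 : π < 3.15 := Real.pi_lt_d2
    have hcsq : Real.cosh x^2 = Real.sinh x^2 + 1 := Real.cosh_sq x
    have hkey : (2 * Real.sinh x^2 + 3 * Real.cosh x^2) * h x
        ≤ 4 * Real.sinh x^2 * Real.sin (2 * h x) := by
      have h1 : (2 * Real.sinh x^2 + 3 * Real.cosh x^2) * h x
          = (5 * Real.sinh x^2 + 3) * h x := by rw [hcsq]; ring
      rw [h1]
      have h2 : 4 * Real.sinh x^2 * (2/π * (2 * h x)) ≤ 4 * Real.sinh x^2 * Real.sin (2 * h x) := by
        apply mul_le_mul_of_nonneg_left hjordan (by positivity)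
      have hs2 : (81:ℝ) ≤ Real.sinh x^2 := by nlinarith
      have hcoef : π * (5*Real.sinh x^2 + 3) ≤ 16 * Real.sinh x^2 := by
        nlinarith [mul_le_mul_of_nonneg_right hπ315.le
          (show (0:ℝ) ≤ 5*Real.sinh x^2 + 3 by positivity)]
      have h3 : (5 * Real.sinh x^2 + 3) * h x ≤ 4 * Real.sinh x^2 * (2/π * (2 * h x)) := by
        have e : 4 * Real.sinh x^2 * (2/π * (2 * h x)) = 16 * Real.sinh x^2 * h x / π := by
          field_simp; ring
        rw [e, le_div_iff₀ hπ]
        nlinarith [mul_le_mul_of_nonneg_right hcoef hh_pos.le]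
      linarith
    apply div_nonpos_of_nonpos_of_nonneg
    · have : 0 ≤ Real.sin (x - α) * (4 * Real.sinh x^2 * Real.sin (2 * h x)
          - (2 * Real.sinh x^2 + 3 * Real.cosh x^2) * h x) :=
        mul_nonneg hsin_nonneg (by linarith)
      nlinarith
    · positivity
  -- B is antitone on the interval
  have hBanti : AntitoneOn (Bf h α) (Icc α (α + π)) := by
    apply antitoneOn_of_deriv_nonpos (convex_Icc _ _)
    · intro x hx
      exact (Bf_deriv hS (hx0 x hx)).continuousAt.continuousWithinAt
    · intro x hx
      rw [interior_Icc] at hx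
      exact (Bf_deriv hS (hx0 x (Ioo_subset_Icc_self hx))).differentiableAt.differentiableWithinAt
    · intro x hx
      rw [interior_Icc] at hx
      rw [(Bf_deriv hS (hx0 x (Ioo_subset_Icc_self hx))).deriv]
      exact hBd_le x (Ioo_subset_Icc_self hx)
  have hmono := hBanti (left_mem_Icc.2 hαπ) (right_mem_Icc.2 hαπ) hαπ
  -- endpoint values
  have hα0 : (0:ℝ) < α := by linarith
  have hβ0 : (0:ℝ) < α + π := by linarith
  have hsα : 0 < Real.sinh α := Real.sinh_pos_iff.2 hα0
  have hsβ : 0 < Real.sinh (α + π) := Real.sinh_pos_iff.2 hβ0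
  have hqα : 0 < Real.sqrt (Real.sinh α) := Real.sqrt_pos.2 hsα
  have hqβ : 0 < Real.sqrt (Real.sinh (α + π)) := Real.sqrt_pos.2 hsβ
  have hhα : 0 < h α := hpos α (left_mem_Icc.2 hαπ)
  have hhβ : 0 < h (α + π) := hpos (α + π) (right_mem_Icc.2 hαπ)
  have eα : Bf h α α = -(Real.sqrt (Real.sinh α) * h α) / Real.sinh α := by
    unfold Bf wf W1f
    rw [sub_self, Real.sin_zero, Real.cos_zero]
    ring
  have hBα : Bf h α α < 0 := by
    rw [eα]
    apply div_neg_of_neg_of_pos _ hsα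
    nlinarith [mul_pos hqα hhα]
  have eβ : Bf h α (α + π)
      = Real.sqrt (Real.sinh (α + π)) * h (α + π) / Real.sinh (α + π) := by
    unfold Bf wf W1f
    rw [add_sub_cancel_left, Real.sin_pi, Real.cos_pi]
    ring
  have hBβ : 0 < Bf h α (α + π) := by
    rw [eβ]
    exact div_pos (mul_pos hqβ hhβ) hsβ
  linarith


lemma solves_neg (hS : SolvesEq14 h) : SolvesEq14 (fun x => -h x) := by
  constructor
  · exact hS.1.neg
  · intro x hx
    have e1 : deriv (fun y => -h y) = fun y => -deriv h y := deriv.neg'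
    rw [e1]
    have e2 : deriv (fun y => -deriv h y) x = -(deriv (deriv h) x) := deriv.neg
    rw [e2]
    have heq := hS.2 x hx
    rw [show 2 * -h x = -(2 * h x) by ring, Real.sin_neg]
    linarith

lemma zero_in_interval (hS : SolvesEq14 h) {α : ℝ} (hα : 3 ≤ α)
    (hsm : ∀ x ∈ Icc α (α + π), |h x| ≤ π/4) :
    ∃ x ∈ Icc α (α + π), h x = 0 := by
  by_contra hno
  push_neg at hno
  have hπ : 0 < π := Real.pi_pos
  have hαπ : α ≤ α + π := by linarith
  have hxpos : ∀ x ∈ Icc α (α + π), (0:ℝ) < x := fun x hx => lt_of_lt_of_le (by linarith) hx.1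
  have hc : ContinuousOn h (Icc α (α + π)) := (hcont hS).mono (fun x hx => hxpos x hx)
  have hdich : ∀ x₁ ∈ Icc α (α + π), ∀ x₂ ∈ Icc α (α + π), h x₁ < 0 → 0 < h x₂ → False := by
    intro x₁ h₁ x₂ h₂ hn hp
    have hsub2 : uIcc x₁ x₂ ⊆ Icc α (α + π) := uIcc_subset_Icc h₁ h₂
    have hmem : (0:ℝ) ∈ uIcc (h x₁) (h x₂) := by
      rw [Set.mem_uIcc]
      left; exact ⟨hn.le, hp.le⟩
    obtain ⟨z, hz, hz0⟩ := intermediate_value_uIcc (hc.mono hsub2) hmem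
    exact hno z (hsub2 hz) hz0
  have hαmem : α ∈ Icc α (α + π) := left_mem_Icc.2 hαπ
  rcases lt_or_gt_of_ne (hno α hαmem) with hneg | hpos
  · -- h is everywhere negative; apply sturm_pos to -h
    have hall : ∀ x ∈ Icc α (α + π), h x < 0 := by
      intro x hx
      rcases lt_or_gt_of_ne (hno x hx) with hx1 | hx2
      · exact hx1
      · exact absurd (hdich α hαmem x hx hneg hx2) not_false
    exact sturm_pos (solves_neg hS) hα
      (fun x hx => by simpa using (hall x hx))
      (fun x hx => by
        have h2 := abs_le.1 (hsm x hx)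
        show -h x ≤ π/4
        linarith [h2.1])
  · have hall : ∀ x ∈ Icc α (α + π), 0 < h x := by
      intro x hx
      rcases lt_or_gt_of_ne (hno x hx) with hx1 | hx2
      · exact absurd (hdich x hx α hαmem hx1 hpos) not_false
      · exact hx2
    exact sturm_pos hS hα hall
      (fun x hx => by
        have := abs_le.1 (hsm x hx)
        linarith [this.2])

end Lem3

end

open Lem3 in
/-- **Lemma 3.** If `b > 0` is sufficiently small then the `b`-orbit has arbitrarily
many zeros: for every `N` there is `δ > 0` such that for all `0 < b < δ` the `b`-orbit
has at least `N` zeros on `(0,∞)`. -/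
theorem small_b_orbits_have_many_zeros (N : ℕ) :
    ∃ δ > (0:ℝ), ∀ b : ℝ, 0 < b → b < δ → ∀ h : ℝ → ℝ, IsBOrbit b h →
      ∃ s : Finset ℝ, N ≤ s.card ∧ ∀ x ∈ s, 0 < x ∧ h x = 0 := by
  have hπ : 0 < π := Real.pi_pos
  set R : ℝ := 3 + (2*(N:ℝ) + 1) * π with hR_def
  have hcast : (0:ℝ) ≤ (N:ℝ) := Nat.cast_nonneg N
  have hR1 : 1 ≤ R := by nlinarith
  refine ⟨π/4 / (15 * Real.exp (4*(R-1))), by positivity, ?_⟩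
  intro b hb hbδ h hO
  obtain ⟨hS, htend⟩ := hO
  have hglob := global_small hb hS htend hR1
  have hE : (0:ℝ) < 15 * Real.exp (4*(R-1)) := by positivity
  have hbE : 15 * b * Real.exp (4*(R-1)) < π/4 := by
    have := (lt_div_iff₀ hE).1 hbδ
    nlinarith
  have hsmall : ∀ x, 0 < x → x ≤ R → |h x| ≤ π/4 := by
    intro x h1 h2
    linarith [hglob x h1 h2]
  have hzero : ∀ k : ℕ, k < N →
      ∃ x ∈ Icc (3 + 2*(k:ℝ)*π) (3 + 2*(k:ℝ)*π + π), h x = 0 := by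
    intro k hk
    have hkc : (0:ℝ) ≤ (k:ℝ) := Nat.cast_nonneg k
    have hkN : (k:ℝ) + 1 ≤ (N:ℝ) := by exact_mod_cast Nat.succ_le_of_lt hk
    have hα : (3:ℝ) ≤ 3 + 2*(k:ℝ)*π := by nlinarith
    apply zero_in_interval hS hα
    intro x hx
    apply hsmall x (lt_of_lt_of_le (by linarith) hx.1)
    have : 3 + 2*(k:ℝ)*π + π ≤ R := by nlinarith
    linarith [hx.2]
  choose z hz1 hz2 using hzero
  classical
  set f : ℕ → ℝ := fun k => if hk : k < N then z k hk else 0 with hf_def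
  have hfIcc : ∀ k (hk : k < N), f k ∈ Icc (3 + 2*(k:ℝ)*π) (3 + 2*(k:ℝ)*π + π) := by
    intro k hk
    simp only [hf_def, dif_pos hk]
    exact hz1 k hk
  have hlt : ∀ {p q : ℕ}, p < q → q < N → f p < f q := by
    intro p q hpq hqN
    have hpN : p < N := lt_trans hpq hqN
    have h1 := hfIcc p hpN
    have h2 := hfIcc q hqN
    have hcast2 : (p:ℝ) + 1 ≤ (q:ℝ) := by exact_mod_cast Nat.succ_le_of_lt hpq
    have : 3 + 2*(p:ℝ)*π + π < 3 + 2*(q:ℝ)*π := by nlinarith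
    linarith [h1.2, h2.1]
  refine ⟨(Finset.range N).image f, ?_, ?_⟩
  · rw [Finset.card_image_of_injOn, Finset.card_range]
    intro i hi j hj hij
    simp only [Finset.coe_range, Set.mem_Iio] at hi hj
    rcases lt_trichotomy i j with hij' | hij' | hij'
    · exact absurd hij (ne_of_lt (hlt hij' hj))
    · exact hij'
    · exact absurd hij.symm (ne_of_lt (hlt hij' hi))
  · intro x hx
    rw [Finset.mem_image] at hx
    obtain ⟨k, hk, rfl⟩ := hx
    rw [Finset.mem_range] at hk
    have h1 := hfIcc k hk
    have hkc : (0:ℝ) ≤ (k:ℝ) := Nat.cast_nonneg k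
    constructor
    · have := h1.1
      nlinarith
    · simp only [hf_def, dif_pos hk]
      exact hz2 k hk
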